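/- Let n ≥ 1, let p₁ ≥ p₂ ≥ … ≥ pₙ ≥ 1 be integers, let S be the diagonal vector field S(x) = (p₁x₁,…,pₙxₙ) on ℂⁿ, and let X : ℂⁿ → ℂⁿ be an entire holomorphic map, not identically zero, satisfying [S,X](x) := DX(x)(S(x)) - S(X(x)) = λ·X(x) for all x ∈ ℂⁿ, where λ ∈ ℂ. Then λ is an integer with λ ≥ -p₁, and X is a polynomial map, i.e., each component of X is given by evaluation of a polynomial in ℂ[x₁,…,xₙ]. -/

import Mathlib

open Complex Polynomial

open Polynomial

/-- evaluate a one-variable polynomial substituted into one mv variable -/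
lemma evalmv {n : ℕ} (x : Fin n → ℂ) (a : Fin n) (P : Polynomial ℂ) :
    MvPolynomial.eval x (Polynomial.aeval (MvPolynomial.X a) P) = P.eval (x a) := by
  induction P using Polynomial.induction_on' with
  | add p q hp hq => simp [hp, hq]
  | monomial m c => simp [Polynomial.aeval_monomial, MvPolynomial.algebraMap_eq]

/-- One-variable Liouville with polynomial growth. -/
lemma onevar_poly : ∀ (N : ℕ) (f : ℂ → ℂ), Differentiable ℂ f → ∀ C : ℝ,
    (∀ z, ‖f z‖ ≤ C * max 1 ‖z‖ ^ N) →
    ∃ P : Polynomial ℂ, P.natDegree ≤ N ∧ ∀ z, f z = P.eval z := by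
  intro N
  induction N with
  | zero =>
    intro f hf C hg
    obtain ⟨c, hc⟩ := hf.exists_eq_const_of_bounded (by
      rw [Metric.isBounded_iff_subset_closedBall (0:ℂ)]
      exact ⟨C, fun y hy => by
        obtain ⟨z, rfl⟩ := hy
        simpa [Metric.mem_closedBall] using (hg z).trans (by simp)⟩)
    exact ⟨Polynomial.C c, by simp, fun z => by simp [hc]⟩
  | succ N ih =>
    intro f hf C hg
    have hC0 : 0 ≤ C := le_trans (norm_nonneg (f 0)) (by simpa using hg 0)
    set g := dslope f 0 with hgdef
    have hgd : Differentiable ℂ g := by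
      intro z
      rcases eq_or_ne z 0 with rfl | hz
      · obtain ⟨q, hq⟩ := hf.analyticAt 0
        exact hq.has_fpower_series_dslope_fslope.analyticAt.differentiableAt
      · exact (differentiableAt_dslope_of_ne hz).mpr (hf z)
    -- bound on unit ball
    obtain ⟨B, hB⟩ := (isCompact_closedBall (0:ℂ) 1).exists_bound_of_continuousOn
      (hgd.continuous.continuousOn)
    have key : ∀ z, ‖g z‖ ≤ max B (2*C) * max 1 ‖z‖ ^ N := by
      intro z
      rcases le_or_gt ‖z‖ 1 with hz | hz
      · calc ‖g z‖ ≤ B := hB z (by simpa [Metric.mem_closedBall] using hz)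
          _ ≤ max B (2*C) * 1 := by simp
          _ ≤ max B (2*C) * max 1 ‖z‖ ^ N := by
              have h1 : (1:ℝ) ≤ max 1 ‖z‖ ^ N := one_le_pow₀ (le_max_left _ _)
              have : (0:ℝ) ≤ max B (2*C) :=
                le_trans (le_trans (norm_nonneg (g 0)) (hB 0 (by simp))) (le_max_left _ _)
              nlinarith
      · have hz0 : z ≠ 0 := by intro hzz; simp [hzz] at hz; linarith
        have hgz : g z = (f z - f 0) / z := by
          rw [hgdef, dslope_of_ne _ hz0, slope_def_field]; field_simp; ring
        have hmax : max 1 ‖z‖ = ‖z‖ := max_eq_right hz.le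
        have hf0 : ‖f 0‖ ≤ C := by simpa using hg 0
        have hfz : ‖f z‖ ≤ C * ‖z‖ ^ (N+1) := by rw [← hmax]; exact hg z
        rw [hgz]
        rw [norm_div]
        rw [div_le_iff₀ (by positivity)]
        have h1 : ‖f z - f 0‖ ≤ C * ‖z‖^(N+1) + C :=
          (norm_sub_le _ _).trans (by linarith)
        have h2 : C ≤ C * ‖z‖^(N+1) := by nlinarith [one_le_pow₀ (hz.le : (1:ℝ) ≤ ‖z‖) (n := N+1)]
        calc ‖f z - f 0‖ ≤ 2 * (C * ‖z‖^(N+1)) := by linarith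
          _ = (2*C) * ‖z‖ ^ N * ‖z‖ := by ring
          _ ≤ max B (2*C) * max 1 ‖z‖ ^ N * ‖z‖ := by
              have : (0:ℝ) ≤ ‖z‖ := norm_nonneg _
              have h3 : (2*C) * ‖z‖ ^ N ≤ max B (2*C) * max 1 ‖z‖ ^ N := by
                rw [hmax]
                have : (0:ℝ) ≤ ‖z‖ ^ N := by positivity
                nlinarith [le_max_right B (2*C)]
              nlinarith
    obtain ⟨P, hPdeg, hP⟩ := ih g hgd _ key
    refine ⟨Polynomial.C (f 0) + Polynomial.X * P, ?_, ?_⟩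
    · refine le_trans (Polynomial.natDegree_add_le _ _) ?_
      simp only [Polynomial.natDegree_C]
      refine max_le (Nat.zero_le _) (le_trans (Polynomial.natDegree_mul_le) ?_)
      simp only [Polynomial.natDegree_X]
      omega
    · intro z
      rcases eq_or_ne z 0 with rfl | hz
      · simp
      · have hgz : g z = (f z - f 0) / z := by
          rw [hgdef, dslope_of_ne _ hz, slope_def_field]; field_simp; ring
        have hh : (f z - f 0) / z = P.eval z := hgz.symm.trans (hP z)
        rw [div_eq_iff hz] at hh
        simp only [Polynomial.eval_add, Polynomial.eval_C, Polynomial.eval_mul, Polynomial.eval_X]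
        linear_combination hh


section ODE
variable {g : ℂ → ℂ} {mu : ℂ}

lemma ode_exp (hg : Differentiable ℂ g) (hode : ∀ s, s * deriv g s = mu * g s) :
    ∀ t : ℂ, g (exp t) = g 1 * exp (mu * t) := by
  set w : ℂ → ℂ := fun t => g (exp t) * exp (-mu * t) with hw
  have hder : ∀ t, HasDerivAt w 0 t := by
    intro t
    have h1 : HasDerivAt (fun t => g (exp t)) (deriv g (exp t) * exp t) t :=
      ((hg (exp t)).hasDerivAt).comp t (hasDerivAt_exp t)
    have h2 : HasDerivAt (fun t : ℂ => exp (-mu * t)) (exp (-mu * t) * -mu) t := by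
      simpa [Function.comp_def] using
        (hasDerivAt_exp (-mu * t)).comp t ((hasDerivAt_id t).const_mul (-mu))
    have h3 : HasDerivAt w _ t := h1.mul h2
    convert h3 using 1
    have h4 : exp t * deriv g (exp t) = mu * g (exp t) := hode (exp t)
    linear_combination (-(exp (-mu * t))) * h4
  have hconst : ∀ t, w t = w 0 := fun t =>
    is_const_of_deriv_eq_zero (fun t => (hder t).differentiableAt)
      (fun t => (hder t).deriv) t 0
  intro t
  have := hconst t
  simp only [hw, mul_zero, neg_mul, zero_mul, neg_zero, Complex.exp_zero, mul_one] at this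
  have he : exp (-(mu * t)) * exp (mu * t) = 1 := by
    rw [← Complex.exp_add]; simp
  calc g (exp t) = g (exp t) * (exp (-(mu * t)) * exp (mu * t)) := by rw [he, mul_one]
    _ = (g (exp t) * exp (-(mu * t))) * exp (mu * t) := by ring
    _ = g 1 * exp (mu * t) := by rw [this]

end ODE

lemma ode_nat (hg : Differentiable ℂ g) (hode : ∀ s, s * deriv g s = mu * g s)
    (hg1 : g 1 ≠ 0) : ∃ N : ℕ, mu = (N : ℂ) := by
  have hexp := ode_exp hg hode
  -- mu is an integer
  have h1 : exp (mu * (2 * Real.pi * I)) = 1 := by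
    have := hexp (2 * Real.pi * I)
    rw [Complex.exp_two_pi_mul_I] at this
    have h2 : g 1 * 1 = g 1 * exp (mu * (2 * Real.pi * I)) := by
      simpa using this
    field_simp at h2
    rw [← mul_assoc, ← mul_assoc]; exact h2.symm
  obtain ⟨k, hk⟩ := Complex.exp_eq_one_iff.mp h1
  have hmu : mu = (k : ℂ) := by
    have h2pi : (2 * (Real.pi:ℂ) * I) ≠ 0 := by
      simp [Real.pi_ne_zero, Complex.I_ne_zero]
    field_simp at hk
    exact hk
  -- k is nonnegative
  rcases le_or_gt 0 k with hk0 | hk0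
  · exact ⟨k.toNat, by rw [hmu]; exact_mod_cast (Int.toNat_of_nonneg hk0).symm⟩
  · exfalso
    set m : ℕ := (-k).toNat with hm
    have hm1 : 1 ≤ m := by omega
    have hmz : (m : ℤ) = -k := Int.toNat_of_nonneg (by omega)
    have hmk : (m : ℂ) = -mu := by
      rw [hmu]; exact_mod_cast congrArg (fun z : ℤ => (z:ℂ)) hmz
    have hcont : ∀ s : ℂ, g s * s ^ m = g 1 := by
      have : Set.EqOn (fun s : ℂ => g s * s ^ m) (fun _ => g 1) {(0:ℂ)}ᶜ := by
        intro s hs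
        have hs0 : s ≠ 0 := hs
        have := hexp (Complex.log s)
        rw [Complex.exp_log hs0] at this
        simp only
        have hsm : s ^ m = exp ((m:ℂ) * Complex.log s) := by
          rw [Complex.exp_nat_mul, Complex.exp_log hs0]
        rw [this, hsm, mul_assoc, ← Complex.exp_add]
        have hz : mu * Complex.log s + (m:ℂ) * Complex.log s = 0 := by
          rw [hmk]; ring
        rw [hz, Complex.exp_zero, mul_one]
      have hcl := Continuous.ext_on (dense_compl_singleton (0:ℂ))
        (hg.continuous.mul (continuous_pow m)) continuous_const this
      exact fun s => congrFun hcl s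
    have := hcont 0
    rw [zero_pow (by omega : m ≠ 0), mul_zero] at this
    exact hg1 this.symm

lemma ode_pow (hg : Differentiable ℂ g) (hode : ∀ s, s * deriv g s = mu * g s)
    (N : ℕ) (hmu : mu = (N : ℂ)) : ∀ s, g s = g 1 * s ^ N := by
  have hexp := ode_exp hg hode
  have heq : Set.EqOn g (fun s => g 1 * s ^ N) {(0:ℂ)}ᶜ := by
    intro s hs
    have hs0 : s ≠ 0 := hs
    have := hexp (Complex.log s)
    rw [Complex.exp_log hs0, hmu, Complex.exp_nat_mul, Complex.exp_log hs0] at this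
    exact this
  have := Continuous.ext_on (dense_compl_singleton (0:ℂ))
    hg.continuous (by continuity) heq
  exact fun s => congrFun this s


lemma line_ode {n : ℕ} (p : Fin n → ℤ) (hpos : ∀ i, 1 ≤ p i)
    (X : (Fin n → ℂ) → (Fin n → ℂ)) (hX : Differentiable ℂ X) (lam : ℂ)
    (h : ∀ x : Fin n → ℂ,
      (fderiv ℂ X x (fun i => (p i : ℂ) * x i)) - (fun i => (p i : ℂ) * X x i)
        = lam • X x)
    (j : Fin n) (x : Fin n → ℂ) :
    Differentiable ℂ (fun s : ℂ => X (fun i => s ^ (p i).toNat * x i) j) ∧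
    ∀ s, s * deriv (fun s : ℂ => X (fun i => s ^ (p i).toNat * x i) j) s
      = (lam + (p j : ℂ)) * X (fun i => s ^ (p i).toNat * x i) j := by
  set c : ℂ → (Fin n → ℂ) := fun s i => s ^ (p i).toNat * x i with hc
  have hcast : ∀ i, (((p i).toNat : ℂ)) = ((p i : ℂ)) := by
    intro i
    have : ((p i).toNat : ℤ) = p i := Int.toNat_of_nonneg (by linarith [hpos i])
    exact_mod_cast congrArg (fun z : ℤ => (z : ℂ)) this
  have hder : ∀ s, HasDerivAt (fun s : ℂ => X (c s) j)
      (fderiv ℂ X (c s) (fun i => (((p i).toNat : ℂ)) * s ^ ((p i).toNat - 1) * x i) j) s := by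
    intro s
    have hci : HasDerivAt c (fun i => (((p i).toNat : ℂ)) * s ^ ((p i).toNat - 1) * x i) s := by
      rw [hasDerivAt_pi]
      intro i
      exact (hasDerivAt_pow ((p i).toNat) s).mul_const (x i)
    have hXc : HasFDerivAt X (fderiv ℂ X (c s)) (c s) := (hX (c s)).hasFDerivAt
    have := hXc.comp_hasDerivAt s hci
    exact hasDerivAt_pi.mp this j
  constructor
  · exact fun s => ((hder s).differentiableAt)
  · intro s
    rw [(hder s).deriv]
    have hsmul : (s • fun i => (((p i).toNat : ℂ)) * s ^ ((p i).toNat - 1) * x i)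
        = fun i => (p i : ℂ) * c s i := by
      funext i
      have h1 : 1 ≤ (p i).toNat := by
        have := hpos i; omega
      obtain ⟨k, hk⟩ : ∃ k, (p i).toNat = k + 1 := ⟨(p i).toNat - 1, by omega⟩
      simp only [Pi.smul_apply, smul_eq_mul, hc, hk]
      rw [← hcast i, hk]
      push_cast
      rw [pow_succ]
      ring
    have hlin : s * fderiv ℂ X (c s) (fun i => (((p i).toNat : ℂ)) * s ^ ((p i).toNat - 1) * x i) j
        = fderiv ℂ X (c s) (fun i => (p i : ℂ) * c s i) j := by
      rw [← hsmul, (fderiv ℂ X (c s)).map_smul]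
      simp
    rw [hlin]
    have hcf := congrFun (h (c s)) j
    simp only [Pi.sub_apply, Pi.smul_apply, smul_eq_mul] at hcf
    linear_combination hcf


lemma lagrange_line {N : ℕ} (F : ℂ → ℂ) (P : Polynomial ℂ) (hdeg : P.natDegree ≤ N)
    (hFP : ∀ t, F t = P.eval t) (t : ℂ) :
    F t = ∑ k : Fin (N+1), F ((k : ℕ) : ℂ) *
      (Lagrange.basis Finset.univ (fun k : Fin (N+1) => ((k : ℕ) : ℂ)) k).eval t := by
  set v : Fin (N+1) → ℂ := fun k => ((k : ℕ) : ℂ) with hv0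
  have hv : Set.InjOn v ↑(Finset.univ : Finset (Fin (N+1))) := by
    intro a _ b _ hab
    simp only [hv0] at hab
    have : (a : ℕ) = (b : ℕ) := by exact_mod_cast hab
    exact Fin.ext this
  have hdlt : P.degree < ((Finset.univ : Finset (Fin (N+1))).card : ℕ) := by
    have hcard : (Finset.univ : Finset (Fin (N+1))).card = N + 1 := by simp
    rw [hcard]
    calc P.degree ≤ (P.natDegree : WithBot ℕ) := Polynomial.degree_le_natDegree
      _ < ((N+1 : ℕ) : WithBot ℕ) := by exact_mod_cast Nat.lt_succ_of_le hdeg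
  have hP := Lagrange.eq_interpolate hv hdlt
  rw [hFP t]
  conv_lhs => rw [hP]
  rw [Lagrange.interpolate_apply, Polynomial.eval_finset_sum]
  refine Finset.sum_congr rfl fun k _ => ?_
  rw [Polynomial.eval_mul, Polynomial.eval_C, ← hFP]

lemma interp {n N : ℕ} (F : (Fin n → ℂ) → ℂ)
    (hline : ∀ (a : Fin n → ℂ) (k : Fin n), ∃ P : Polynomial ℂ, P.natDegree ≤ N ∧
      ∀ t, F (Function.update a k t) = P.eval t) :
    ∃ Q : MvPolynomial (Fin n) ℂ, ∀ x, F x = MvPolynomial.eval x Q := by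
  set v : Fin (N+1) → ℂ := fun k => ((k : ℕ) : ℂ) with hv0
  set Bas : Fin (N+1) → Polynomial ℂ := Lagrange.basis Finset.univ v with hBas
  have key : ∀ (a : Fin n → ℂ) (k : Fin n),
      F a = ∑ l : Fin (N+1), F (Function.update a k (v l)) * (Bas l).eval (a k) := by
    intro a k
    obtain ⟨P, hdeg, hFP⟩ := hline a k
    have := lagrange_line (fun t => F (Function.update a k t)) P hdeg hFP (a k)
    rw [Function.update_eq_self] at this
    exact this
  have main : ∀ s : Finset (Fin n),
      ∃ (ι : Type) (_ : Fintype ι) (c : ι → (Fin n → ℂ) → ℂ)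
        (q : ι → MvPolynomial (Fin n) ℂ),
        (∀ l x y, (∀ i, i ∉ s → x i = y i) → c l x = c l y) ∧
        (∀ l (x y : Fin n → ℂ), (∀ i, i ∈ s → x i = y i) →
          MvPolynomial.eval x (q l) = MvPolynomial.eval y (q l)) ∧
        (∀ x, F x = ∑ l, c l x * MvPolynomial.eval x (q l)) := by
    intro s
    induction s using Finset.induction_on with
    | empty =>
      refine ⟨Unit, inferInstance, fun _ => F, fun _ => 1, ?_, ?_, ?_⟩
      · intro l x y hxy
        have : x = y := funext fun i => hxy i (by simp)
        rw [this]
      · intro l x y _; simp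
      · intro x; simp
    | @insert a s ha ih =>
      obtain ⟨ι, _, c, q, hc, hq, hsum⟩ := ih
      refine ⟨ι × Fin (N+1), inferInstance,
        fun lk x => c lk.1 (Function.update x a (v lk.2)),
        fun lk => q lk.1 * Polynomial.aeval (MvPolynomial.X a) (Bas lk.2),
        ?_, ?_, ?_⟩
      · rintro ⟨l, k⟩ x y hxy
        refine hc l _ _ ?_
        intro i hi
        by_cases hia : i = a
        · subst hia; simp
        · rw [Function.update_of_ne hia, Function.update_of_ne hia]
          exact hxy i (by simp [hia, hi])
      · rintro ⟨l, k⟩ x y hxy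
        rw [map_mul, map_mul, evalmv, evalmv]
        rw [hq l x y (fun i hi => hxy i (Finset.mem_insert_of_mem hi)),
            hxy a (Finset.mem_insert_self a s)]
      · intro x
        have hupd : ∀ (l' : Fin (N+1)) (l : ι),
            MvPolynomial.eval (Function.update x a (v l')) (q l)
              = MvPolynomial.eval x (q l) := by
          intro l' l
          refine hq l _ _ ?_
          intro i hi
          have hia : i ≠ a := fun hia => ha (hia ▸ hi)
          rw [Function.update_of_ne hia]
        calc F x = ∑ l' : Fin (N+1), F (Function.update x a (v l')) * (Bas l').eval (x a) :=
              key x a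
          _ = ∑ l' : Fin (N+1), (∑ l : ι, c l (Function.update x a (v l'))
                * MvPolynomial.eval x (q l)) * (Bas l').eval (x a) := by
              refine Finset.sum_congr rfl fun l' _ => ?_
              rw [hsum (Function.update x a (v l'))]
              congr 1
              exact Finset.sum_congr rfl fun l _ => by rw [hupd l' l]
          _ = ∑ l' : Fin (N+1), ∑ l : ι, c l (Function.update x a (v l'))
                * (MvPolynomial.eval x (q l) * (Bas l').eval (x a)) := by
              refine Finset.sum_congr rfl fun l' _ => ?_
              rw [Finset.sum_mul]
              exact Finset.sum_congr rfl fun l _ => by ring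
          _ = ∑ lk : ι × Fin (N+1), c lk.1 (Function.update x a (v lk.2))
                * MvPolynomial.eval x (q lk.1 * Polynomial.aeval (MvPolynomial.X a) (Bas lk.2)) := by
              conv_rhs => rw [Fintype.sum_prod_type, Finset.sum_comm]
              refine Finset.sum_congr rfl fun l' _ => Finset.sum_congr rfl fun l _ => ?_
              rw [map_mul, evalmv]
  obtain ⟨ι, _, c, q, hc, _, hsum⟩ := main Finset.univ
  refine ⟨∑ l : ι, MvPolynomial.C (c l 0) * q l, fun x => ?_⟩
  rw [map_sum, hsum x]
  refine Finset.sum_congr rfl fun l _ => ?_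
  rw [map_mul, MvPolynomial.eval_C, hc l x 0 (fun i hi => absurd (Finset.mem_univ i) hi)]

/-- Proposition 2.1(c): if `p₁ ≥ … ≥ pₙ ≥ 1` and `X` is an entire
holomorphic vector field on `ℂⁿ`, not identically zero, with `[S,X] = λ·X`,
then `λ` is an integer, `λ ≥ -p₁`, and `X` is a polynomial map. -/
theorem stmt4 (n : ℕ) (hn : 0 < n) (p : Fin n → ℤ)
    (hanti : Antitone p) (hpos : ∀ i, 1 ≤ p i)
    (X : (Fin n → ℂ) → (Fin n → ℂ)) (hX : Differentiable ℂ X)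
    (hX0 : ∃ x, X x ≠ 0) (lam : ℂ)
    (h : ∀ x : Fin n → ℂ,
      (fderiv ℂ X x (fun i => (p i : ℂ) * x i)) - (fun i => (p i : ℂ) * X x i)
        = lam • X x) :
    (∃ m : ℤ, lam = (m : ℂ) ∧ -(p ⟨0, hn⟩) ≤ m) ∧
      ∀ j : Fin n, ∃ Q : MvPolynomial (Fin n) ℂ,
        ∀ x : Fin n → ℂ, X x j = MvPolynomial.eval x Q := by
  classical
  obtain ⟨x₀, hx₀⟩ := hX0
  obtain ⟨j₀, hj₀⟩ : ∃ j, X x₀ j ≠ 0 := by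
    by_contra hcon; push_neg at hcon; exact hx₀ (funext hcon)
  have hone : ∀ x : Fin n → ℂ, (fun i => (1:ℂ) ^ (p i).toNat * x i) = x := by
    intro x; funext i; simp
  obtain ⟨hd₀, hode₀⟩ := line_ode p hpos X hX lam h j₀ x₀
  have hg1 : (fun s : ℂ => X (fun i => s ^ (p i).toNat * x₀ i) j₀) 1 ≠ 0 := by
    simpa [hone x₀] using hj₀
  obtain ⟨N₀, hN₀⟩ := ode_nat hd₀ hode₀ hg1
  constructor
  · refine ⟨(N₀ : ℤ) - p j₀, by push_cast; linear_combination hN₀, ?_⟩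
    have hle : p j₀ ≤ p ⟨0, hn⟩ := hanti (by simp [Fin.le_def])
    omega
  · intro j
    by_cases hjz : ∀ x, X x j = 0
    · exact ⟨0, fun x => by simp [hjz x]⟩
    push_neg at hjz
    obtain ⟨x₁, hx₁⟩ := hjz
    obtain ⟨hd₁, hode₁⟩ := line_ode p hpos X hX lam h j x₁
    obtain ⟨N, hN⟩ := ode_nat hd₁ hode₁ (by simpa [hone x₁] using hx₁)
    have hom : ∀ (x : Fin n → ℂ) (s : ℂ),
        X (fun i => s ^ (p i).toNat * x i) j = X x j * s ^ N := by
      intro x s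
      obtain ⟨hd, hode⟩ := line_ode p hpos X hX lam h j x
      have := ode_pow hd hode N hN s
      simpa [hone x] using this
    have hcont : Continuous (fun x : Fin n → ℂ => X x j) :=
      (continuous_apply j).comp hX.continuous
    obtain ⟨C, hC⟩ := (isCompact_closedBall (0 : Fin n → ℂ) 1).exists_bound_of_continuousOn
      hcont.continuousOn
    have hC0 : 0 ≤ C := le_trans (norm_nonneg _) (hC 0 (by simp))
    have hgrow : ∀ x : Fin n → ℂ, ‖X x j‖ ≤ C * max 1 ‖x‖ ^ N := by
      intro x
      rcases le_or_gt ‖x‖ 1 with hx1 | hx1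
      · have h1 : ‖X x j‖ ≤ C := hC x (by simpa [Metric.mem_closedBall] using hx1)
        have h2 : (1:ℝ) ≤ max 1 ‖x‖ ^ N := one_le_pow₀ (le_max_left _ _)
        nlinarith
      · set R : ℝ := ‖x‖ with hRdef
        have hR1 : 1 < R := hx1
        have hR0 : ((R:ℂ)) ≠ 0 := by
          simp only [ne_eq, Complex.ofReal_eq_zero]
          intro hh; rw [hh] at hR1; norm_num at hR1
        set y : Fin n → ℂ := fun i => x i / (R:ℂ) ^ (p i).toNat with hy
        have hxy : (fun i => ((R:ℂ)) ^ (p i).toNat * y i) = x := by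
          funext i; rw [hy]; field_simp
        have hyb : y ∈ Metric.closedBall (0 : Fin n → ℂ) 1 := by
          rw [Metric.mem_closedBall, dist_zero_right]
          rw [pi_norm_le_iff_of_nonneg (by norm_num : (0:ℝ) ≤ 1)]
          intro i
          rw [hy]
          simp only [norm_div, norm_pow, Complex.norm_real, Real.norm_eq_abs,
            abs_of_pos (by linarith : (0:ℝ) < R)]
          rw [div_le_one (by positivity)]
          calc ‖x i‖ ≤ ‖x‖ := norm_le_pi_norm x i
            _ = R := rfl
            _ ≤ R ^ (p i).toNat := le_self_pow₀ (by linarith) (by have := hpos i; omega)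
        have hhom := hom y (R:ℂ)
        rw [hxy] at hhom
        calc ‖X x j‖ = ‖X y j‖ * ‖((R:ℂ)) ^ N‖ := by rw [hhom, norm_mul]
          _ = ‖X y j‖ * R ^ N := by
              rw [norm_pow, Complex.norm_real, Real.norm_eq_abs,
                abs_of_pos (by linarith : (0:ℝ) < R)]
          _ ≤ C * R ^ N := by
              have hCy := hC y hyb
              have hRN : (0:ℝ) ≤ R ^ N := by positivity
              nlinarith
          _ = C * max 1 ‖x‖ ^ N := by rw [max_eq_right (le_of_lt hR1)]
    have hline : ∀ (a : Fin n → ℂ) (k : Fin n), ∃ P : Polynomial ℂ,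
        P.natDegree ≤ N ∧ ∀ t, X (Function.update a k t) j = P.eval t := by
      intro a k
      have hu : Differentiable ℂ (fun t : ℂ => Function.update a k t) := by
        rw [differentiable_pi]
        intro i
        by_cases hik : i = k
        · subst hik
          simpa [Function.update_apply] using (differentiable_id : Differentiable ℂ (fun t : ℂ => t))
        · simp only [Function.update_apply, hik, if_false]
          exact differentiable_const _
      have hdiff : Differentiable ℂ (fun t : ℂ => X (Function.update a k t) j) :=
        ((differentiable_pi.mp hX) j).comp hu
      set A : ℝ := max 1 ‖a‖ with hA
      have hA1 : (1:ℝ) ≤ A := le_max_left _ _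
      have hgl : ∀ t : ℂ, ‖X (Function.update a k t) j‖ ≤ (C * A ^ N) * max 1 ‖t‖ ^ N := by
        intro t
        have hub : ‖Function.update a k t‖ ≤ A * max 1 ‖t‖ := by
          rw [pi_norm_le_iff_of_nonneg (by nlinarith [le_max_left (1:ℝ) ‖t‖])]
          intro i
          rcases eq_or_ne i k with rfl | hik
          · rw [Function.update_self]
            calc ‖t‖ ≤ max 1 ‖t‖ := le_max_right _ _
              _ ≤ A * max 1 ‖t‖ := by nlinarith [le_max_left (1:ℝ) ‖t‖]
          · rw [Function.update_of_ne hik]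
            calc ‖a i‖ ≤ ‖a‖ := norm_le_pi_norm a i
              _ ≤ A := le_max_right _ _
              _ ≤ A * max 1 ‖t‖ := by nlinarith [le_max_left (1:ℝ) ‖t‖]
        have hmb : max 1 ‖Function.update a k t‖ ≤ A * max 1 ‖t‖ := by
          refine max_le ?_ hub
          nlinarith [le_max_left (1:ℝ) ‖t‖]
        calc ‖X (Function.update a k t) j‖ ≤ C * max 1 ‖Function.update a k t‖ ^ N :=
              hgrow _
          _ ≤ C * (A * max 1 ‖t‖) ^ N := by
              have := pow_le_pow_left₀ (by positivity) hmb N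
              nlinarith
          _ = (C * A ^ N) * max 1 ‖t‖ ^ N := by rw [mul_pow]; ring
      exact onevar_poly N _ hdiff _ hgl
    obtain ⟨Q, hQ⟩ := interp (fun x => X x j) hline
    exact ⟨Q, hQ⟩
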